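/- Let ω : A × B → k be a non-degenerate Hopf pairing with inverse copairing ω' = Σ_i b_i ⊗ a_i, and let X be a k-vector space. Then: (1) if δ : X → B ⊗ X, δ(x) = x_{(-1)} ⊗ x_{(0)}, is a left B-comodule structure on X, then a·x := ω(a, x_{(-1)}) x_{(0)} defines a left A-module structure on X; (2) if ρ : A ⊗ X → X is a left A-module structure on X, then δ(x) := Σ_i b_i ⊗ ρ(a_i ⊗ x) defines a left B-comodule structure on X; (3) these two assignments are mutually inverse bijections between the set of left B-comodule structures on X and the set of left A-module structures on X. -/
import Mathlib


open TensorProduct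

noncomputable section

variable {k : Type*} [Field k]

/-- A Hopf pairing between the Hopf algebras `A` and `B` over the field `k`. -/
structure IsHopfPairing {A B : Type*} [Ring A] [HopfAlgebra k A] [Ring B] [HopfAlgebra k B]
    (ω : A →ₗ[k] B →ₗ[k] k) : Prop where
  mul_left : ∀ (a a' : A) (b : B),
    ω (a * a') b =
      (LinearMap.mul' k k ∘ₗ TensorProduct.map (ω a') (ω a)) (Coalgebra.comul (R := k) b)
  one_left : ∀ b : B, ω 1 b = Coalgebra.counit (R := k) b
  mul_right : ∀ (a : A) (b b' : B),
    ω a (b * b') =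
      (LinearMap.mul' k k ∘ₗ TensorProduct.map (ω.flip b') (ω.flip b)) (Coalgebra.comul (R := k) a)
  one_right : ∀ a : A, ω a 1 = Coalgebra.counit (R := k) a

/-- Non-degeneracy of a pairing, witnessed by an inverse copairing `Σᵢ bᵢ ⊗ aᵢ`. -/
def IsInverseCopairing {A B : Type*} [Ring A] [HopfAlgebra k A] [Ring B] [HopfAlgebra k B]
    (ω : A →ₗ[k] B →ₗ[k] k) {n : ℕ} (b : Fin n → B) (a : Fin n → A) : Prop :=
  (∀ x : A, ∑ i, ω x (b i) • a i = x) ∧ (∀ y : B, ∑ i, ω (a i) y • b i = y)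

variable {A B X : Type*} [Ring A] [HopfAlgebra k A] [Ring B] [HopfAlgebra k B]
  [AddCommGroup X] [Module k X]

/-- `δ : X → B ⊗ X` is a left `B`-comodule structure: coassociativity and counitality. -/
def IsComodule (δ : X →ₗ[k] B ⊗[k] X) : Prop :=
  ((TensorProduct.assoc k B B X).toLinearMap
      ∘ₗ LinearMap.rTensor X (Coalgebra.comul (R := k)) ∘ₗ δ = LinearMap.lTensor B δ ∘ₗ δ)
  ∧ ((TensorProduct.lid k X).toLinearMap
      ∘ₗ LinearMap.rTensor X (Coalgebra.counit (R := k)) ∘ₗ δ = LinearMap.id)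

/-- `ρ : A → End(X)` is a left `A`-module structure: unitality and associativity
(bilinearity is built into the type). -/
def IsModuleStructure (ρ : A →ₗ[k] X →ₗ[k] X) : Prop :=
  ρ 1 = LinearMap.id ∧ ∀ a a' : A, ρ (a * a') = ρ a ∘ₗ ρ a'

/-- The `A`-action `a · x := ω(a, x₍₋₁₎) x₍₀₎` obtained from a `B`-coaction `δ`. -/
def actOf (ω : A →ₗ[k] B →ₗ[k] k) (δ : X →ₗ[k] B ⊗[k] X) : A →ₗ[k] X →ₗ[k] X where
  toFun a := (TensorProduct.lid k X).toLinearMap ∘ₗ LinearMap.rTensor X (ω a) ∘ₗ δ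
  map_add' a a' := by
    simp [map_add, LinearMap.rTensor_add, LinearMap.add_comp, LinearMap.comp_add]
  map_smul' c a := by
    simp [map_smul, LinearMap.rTensor_smul, LinearMap.smul_comp, LinearMap.comp_smul]

/-- The `B`-coaction `δ(x) := Σᵢ bᵢ ⊗ ρ(aᵢ)(x)` obtained from an `A`-action `ρ`
via the inverse copairing `Σᵢ bᵢ ⊗ aᵢ`. -/
def coactOf {n : ℕ} (b : Fin n → B) (a : Fin n → A) (ρ : A →ₗ[k] X →ₗ[k] X) :
    X →ₗ[k] B ⊗[k] X :=
  ∑ i, (TensorProduct.mk k B X (b i)) ∘ₗ (ρ (a i))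

/-! ### Auxiliary lemmas -/

/-- Naturality of the contraction `lid ∘ rTensor f`. -/
lemma aux_nat {Y : Type*} [AddCommGroup Y] [Module k Y] (f : B →ₗ[k] k) (g : X →ₗ[k] Y) :
    g ∘ₗ ((TensorProduct.lid k X).toLinearMap ∘ₗ LinearMap.rTensor X f)
      = (TensorProduct.lid k Y).toLinearMap ∘ₗ LinearMap.rTensor Y f ∘ₗ LinearMap.lTensor B g := by
  apply TensorProduct.ext'
  intro u x
  simp

/-- Naturality of the associator in the last slot. -/
lemma aux_assoc_nat (g : A →ₗ[k] X) :
    LinearMap.lTensor B (LinearMap.lTensor B g) ∘ₗ (TensorProduct.assoc k B B A).toLinearMap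
      = (TensorProduct.assoc k B B X).toLinearMap ∘ₗ LinearMap.lTensor (B ⊗[k] B) g := by
  apply TensorProduct.ext_threefold
  intro u v c
  simp

/-- The two-slot contraction on pure tensors: `lid ∘ rTensor (mul' ∘ map f g) ∘ assoc.symm`. -/
lemma aux_two_slot (f g : B →ₗ[k] k) :
    (TensorProduct.lid k X).toLinearMap
        ∘ₗ LinearMap.rTensor X (LinearMap.mul' k k ∘ₗ TensorProduct.map f g)
        ∘ₗ (TensorProduct.assoc k B B X).symm.toLinearMap
      = ((TensorProduct.lid k X).toLinearMap ∘ₗ LinearMap.rTensor X f)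
          ∘ₗ LinearMap.lTensor B ((TensorProduct.lid k X).toLinearMap ∘ₗ LinearMap.rTensor X g) := by
  apply TensorProduct.ext'
  intro u t
  induction t using TensorProduct.induction_on with
  | zero => simp
  | tmul v x => simp [mul_smul, smul_comm (f u) (g v)]
  | add s t hs ht =>
      simp only [tmul_add, map_add] at *
      rw [hs, ht]

/-- The key copairing identity `Σᵢ Δ(bᵢ) ⊗ aᵢ = Σₚ Σ_q bₚ ⊗ b_q ⊗ (a_q * aₚ)`. -/
lemma aux_star (ω : A →ₗ[k] B →ₗ[k] k) (hω : IsHopfPairing ω)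
    {n : ℕ} (b : Fin n → B) (a : Fin n → A) (hcop : IsInverseCopairing ω b a) :
    ∑ i, (TensorProduct.assoc k B B A) ((Coalgebra.comul (R := k) (b i)) ⊗ₜ[k] a i)
      = ∑ p, ∑ q, b p ⊗ₜ[k] (b q ⊗ₜ[k] (a q * a p)) := by
  have key : ∀ i, (TensorProduct.assoc k B B A).toLinearMap
        ∘ₗ (TensorProduct.mk k (B ⊗[k] B) A).flip (a i)
      = ∑ p, ∑ q, (LinearMap.mul' k k ∘ₗ
          TensorProduct.map (ω (a p)) (ω (a q))).smulRight (b p ⊗ₜ[k] (b q ⊗ₜ[k] a i)) := by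
    intro i
    apply TensorProduct.ext'
    intro u v
    have hl : ((TensorProduct.assoc k B B A).toLinearMap
        ∘ₗ (TensorProduct.mk k (B ⊗[k] B) A).flip (a i)) (u ⊗ₜ[k] v)
        = u ⊗ₜ[k] (v ⊗ₜ[k] a i) := by simp
    have hr : (∑ p, ∑ q, (LinearMap.mul' k k ∘ₗ
          TensorProduct.map (ω (a p)) (ω (a q))).smulRight (b p ⊗ₜ[k] (b q ⊗ₜ[k] a i)))
          (u ⊗ₜ[k] v)
        = ∑ p, ∑ q, (ω (a p) u * ω (a q) v) • (b p ⊗ₜ[k] (b q ⊗ₜ[k] a i)) := by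
      simp [LinearMap.sum_apply]
    rw [hl, hr]
    conv_lhs => rw [← hcop.2 u, ← hcop.2 v]
    simp only [sum_tmul, tmul_sum, ← smul_tmul', tmul_smul, Finset.smul_sum, smul_smul]
    rw [Finset.sum_comm]
    simp [mul_comm]
  have L : ∀ i, (TensorProduct.assoc k B B A) ((Coalgebra.comul (R := k) (b i)) ⊗ₜ[k] a i)
      = ∑ p, ∑ q, ((LinearMap.mul' k k ∘ₗ
          TensorProduct.map (ω (a p)) (ω (a q))) (Coalgebra.comul (R := k) (b i)))
            • (b p ⊗ₜ[k] (b q ⊗ₜ[k] a i)) := by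
    intro i
    have := DFunLike.congr_fun (key i) (Coalgebra.comul (R := k) (b i))
    simpa using this
  have R : ∀ p q, b p ⊗ₜ[k] (b q ⊗ₜ[k] (a q * a p))
      = ∑ i, ((LinearMap.mul' k k ∘ₗ
          TensorProduct.map (ω (a p)) (ω (a q))) (Coalgebra.comul (R := k) (b i)))
            • (b p ⊗ₜ[k] (b q ⊗ₜ[k] a i)) := by
    intro p q
    conv_lhs => rw [← hcop.1 (a q * a p)]
    rw [tmul_sum, tmul_sum]
    refine Finset.sum_congr rfl fun i _ => ?_
    rw [hω.mul_left (a q) (a p) (b i), tmul_smul, tmul_smul]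
  have hL := Finset.sum_congr rfl fun i (_ : i ∈ Finset.univ) => L i
  have hR := Finset.sum_congr rfl fun p (_ : p ∈ Finset.univ) =>
    Finset.sum_congr rfl fun q (_ : q ∈ Finset.univ) => R p q
  rw [hL, hR, Finset.sum_comm]
  refine Finset.sum_congr rfl fun p _ => ?_
  rw [Finset.sum_comm]

/-- Contraction with the copairing is the identity on `B ⊗ X`. -/
lemma aux_contract (ω : A →ₗ[k] B →ₗ[k] k)
    {n : ℕ} (b : Fin n → B) (a : Fin n → A) (hcop : IsInverseCopairing ω b a)
    (t : B ⊗[k] X) :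
    ∑ i, b i ⊗ₜ[k] (TensorProduct.lid k X) (LinearMap.rTensor X (ω (a i)) t) = t := by
  induction t using TensorProduct.induction_on with
  | zero => simp
  | tmul u x =>
      simp only [LinearMap.rTensor_tmul, lid_tmul]
      calc ∑ i, b i ⊗ₜ[k] ((ω (a i)) u • x)
          = ∑ i, (ω (a i) u • b i) ⊗ₜ[k] x := by
            refine Finset.sum_congr rfl fun i _ => ?_
            rw [tmul_smul, smul_tmul']
        _ = u ⊗ₜ[k] x := by rw [← sum_tmul, hcop.2 u]
  | add s t hs ht =>
      simp only [map_add, tmul_add, Finset.sum_add_distrib] at *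
      rw [hs, ht]

/-- For a non-degenerate Hopf pairing `ω : A × B → k` with inverse
copairing `Σᵢ bᵢ ⊗ aᵢ` and a `k`-vector space `X`: (1) every left `B`-comodule
structure on `X` induces a left `A`-module structure `a · x = ω(a, x₍₋₁₎) x₍₀₎`;
(2) every left `A`-module structure induces a left `B`-comodule structure
`x ↦ Σᵢ bᵢ ⊗ (aᵢ · x)`; (3) these two assignments are mutually inverse bijections. -/
theorem comodule_module_bijection (ω : A →ₗ[k] B →ₗ[k] k) (hω : IsHopfPairing ω)
    {n : ℕ} (b : Fin n → B) (a : Fin n → A) (hcop : IsInverseCopairing ω b a) :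
    (∀ δ : X →ₗ[k] B ⊗[k] X, IsComodule δ → IsModuleStructure (actOf ω δ))
    ∧ (∀ ρ : A →ₗ[k] X →ₗ[k] X, IsModuleStructure ρ → IsComodule (coactOf b a ρ))
    ∧ (∀ δ : X →ₗ[k] B ⊗[k] X, IsComodule δ → coactOf b a (actOf ω δ) = δ)
    ∧ (∀ ρ : A →ₗ[k] X →ₗ[k] X, IsModuleStructure ρ → actOf ω (coactOf b a ρ) = ρ) := by
  have hact : ∀ (δ : X →ₗ[k] B ⊗[k] X) (c : A) (x : X),
      actOf ω δ c x = (TensorProduct.lid k X) (LinearMap.rTensor X (ω c) (δ x)) := by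
    intro δ c x; rfl
  have hcoact : ∀ (ρ : A →ₗ[k] X →ₗ[k] X) (x : X),
      coactOf b a ρ x = ∑ i, b i ⊗ₜ[k] ρ (a i) x := by
    intro ρ x
    simp [coactOf, LinearMap.sum_apply]
  refine ⟨?_, ?_, ?_, ?_⟩
  · -- (1) a comodule structure gives a module structure
    intro δ hδ
    constructor
    · -- unitality
      apply LinearMap.ext; intro x
      rw [hact, show ω 1 = Coalgebra.counit (R := k) from LinearMap.ext hω.one_left]
      have := DFunLike.congr_fun hδ.2 x
      simpa using this
    · -- associativity
      intro a1 a2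
      apply LinearMap.ext; intro x
      rw [hact, show ω (a1 * a2)
        = (LinearMap.mul' k k ∘ₗ TensorProduct.map (ω a2) (ω a1)) ∘ₗ Coalgebra.comul (R := k)
          from LinearMap.ext (hω.mul_left a1 a2), LinearMap.rTensor_comp, LinearMap.comp_apply]
      have hco : LinearMap.rTensor X (Coalgebra.comul (R := k)) (δ x)
          = (TensorProduct.assoc k B B X).symm (LinearMap.lTensor B δ (δ x)) := by
        have := DFunLike.congr_fun hδ.1 x
        simp only [LinearMap.comp_apply, LinearEquiv.coe_coe] at this
        rw [← this, LinearEquiv.symm_apply_apply]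
      rw [hco]
      have h2 := DFunLike.congr_fun (aux_two_slot (ω a2) (ω a1)) (LinearMap.lTensor B δ (δ x))
      simp only [LinearMap.comp_apply, LinearEquiv.coe_coe] at h2
      rw [h2]
      rw [← LinearMap.comp_apply (LinearMap.lTensor B _) (LinearMap.lTensor B δ),
        ← LinearMap.lTensor_comp]
      have h3 := DFunLike.congr_fun
        (aux_nat (ω a2) (((TensorProduct.lid k X).toLinearMap
          ∘ₗ LinearMap.rTensor X (ω a1)) ∘ₗ δ)) (δ x)
      simp only [LinearMap.comp_apply, LinearEquiv.coe_coe] at h3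
      rw [← h3]
      rfl
  · -- (2) a module structure gives a comodule structure
    intro ρ hρ
    constructor
    · -- coassociativity
      apply LinearMap.ext; intro x
      simp only [LinearMap.comp_apply, LinearEquiv.coe_coe, hcoact]
      have hstar := congrArg (LinearMap.lTensor B (LinearMap.lTensor B (ρ.flip x)))
        (aux_star ω hω b a hcop)
      have hGL : ∀ i, (LinearMap.lTensor B (LinearMap.lTensor B (ρ.flip x)))
            ((TensorProduct.assoc k B B A) ((Coalgebra.comul (R := k) (b i)) ⊗ₜ[k] a i))
          = (TensorProduct.assoc k B B X)
              ((Coalgebra.comul (R := k) (b i)) ⊗ₜ[k] ρ (a i) x) := by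
        intro i
        have := DFunLike.congr_fun (aux_assoc_nat (ρ.flip x))
          ((Coalgebra.comul (R := k) (b i)) ⊗ₜ[k] a i)
        simpa using this
      simp only [map_sum, hGL, LinearMap.lTensor_tmul, LinearMap.flip_apply] at hstar
      calc (TensorProduct.assoc k B B X)
            (LinearMap.rTensor X (Coalgebra.comul (R := k)) (∑ i, b i ⊗ₜ[k] ρ (a i) x))
          = ∑ i, (TensorProduct.assoc k B B X)
              ((Coalgebra.comul (R := k) (b i)) ⊗ₜ[k] ρ (a i) x) := by
            simp [map_sum]
        _ = ∑ p, ∑ q, b p ⊗ₜ[k] (b q ⊗ₜ[k] ρ (a q * a p) x) := hstar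
        _ = LinearMap.lTensor B (coactOf b a ρ) (∑ i, b i ⊗ₜ[k] ρ (a i) x) := by
            simp only [map_sum, LinearMap.lTensor_tmul, hcoact, tmul_sum]
            refine Finset.sum_congr rfl fun p _ => Finset.sum_congr rfl fun q _ => ?_
            rw [hρ.2 (a q) (a p), LinearMap.comp_apply]
    · -- counitality
      apply LinearMap.ext; intro x
      simp only [LinearMap.comp_apply, LinearEquiv.coe_coe, hcoact, map_sum,
        LinearMap.rTensor_tmul, lid_tmul, LinearMap.id_coe, id_eq]
      have h1 : ∑ i, ω 1 (b i) • a i = 1 := hcop.1 1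
      calc ∑ i, Coalgebra.counit (R := k) (b i) • ρ (a i) x
          = ∑ i, ω 1 (b i) • ρ (a i) x := by
            refine Finset.sum_congr rfl fun i _ => ?_
            rw [hω.one_left]
        _ = ρ (∑ i, ω 1 (b i) • a i) x := by
            simp [map_sum, LinearMap.sum_apply]
        _ = x := by rw [h1, hρ.1]; rfl
  · -- (3) coact ∘ act = id
    intro δ _
    apply LinearMap.ext; intro x
    rw [hcoact]
    simp only [hact]
    exact aux_contract ω b a hcop (δ x)
  · -- (4) act ∘ coact = id
    intro ρ _
    apply LinearMap.ext; intro c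
    apply LinearMap.ext; intro x
    rw [hact, hcoact]
    simp only [map_sum, LinearMap.rTensor_tmul, lid_tmul]
    calc ∑ i, ω c (b i) • ρ (a i) x
        = ρ (∑ i, ω c (b i) • a i) x := by simp [map_sum, LinearMap.sum_apply]
      _ = ρ c x := by rw [hcop.1 c]

end
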